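/- arXiv:2303.02733 — 5 statements merged into one kernel-verified Lean document; each statement's English description precedes it below -/
import Mathlib

section
/- Let I be a finite index set and let M₁, …, M_N : I → ℝ be binary masks (each Mₙ(i) ∈ {0,1}), with spatial gradient scaling G = Σₙ Mₙ (pointwise sum). Let φ : ℝ^{T+1} → ℝ be a linear map and let f be the associated elementwise linear optimizer, f(g⁽ᵀ⁾, …, g⁽⁰⁾)(i) = φ(g⁽ᵀ⁾(i), …, g⁽⁰⁾(i)). Then for any gradient history g⁽⁰⁾, …, g⁽ᵀ⁾ : I → ℝ, Σₙ Mₙ ⊙ f(Mₙ ⊙ g⁽ᵀ⁾, …, Mₙ ⊙ g⁽⁰⁾) = f(G ⊙ g⁽ᵀ⁾, …, G ⊙ g⁽⁰⁾), where ⊙ denotes pointwise multiplication of functions I → ℝ. -/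
/-- For binary masks `M 1, …, M N : I → ℝ` with spatial gradient scaling
`G = ∑ n, M n`, and an elementwise linear optimizer `f` given by a linear map
`φ : ℝ^(T+1) → ℝ` acting coordinatewise, the sum of masked optimizer outputs on masked
gradient histories equals the optimizer output on the `G`-scaled gradient history. -/
theorem sgs_masked_optimizer_merge
    {I : Type*} [Fintype I] {N T : ℕ}
    (M : Fin N → I → ℝ)
    (hM : ∀ n i, M n i = 0 ∨ M n i = 1)
    (G : I → ℝ) (hG : G = ∑ n, M n)
    (φ : (Fin (T + 1) → ℝ) →ₗ[ℝ] ℝ)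
    (g : Fin (T + 1) → I → ℝ) :
    (∑ n, M n * (fun i => φ (fun j => (M n * g j) i)))
      = fun i => φ (fun j => (G * g j) i) := by
  funext i
  have hR : (fun j => (G * g j) i) = (G i) • (fun j => g j i) := by
    funext j; simp [smul_eq_mul]
  have hterm : ∀ n, M n i * φ (fun j => (M n * g j) i)
      = M n i * φ (fun j => g j i) := by
    intro n
    rcases hM n i with h | h <;> simp [Pi.mul_apply, h]
  calc (∑ n, M n * fun i => φ fun j => (M n * g j) i) i
      = ∑ n, M n i * φ (fun j => (M n * g j) i) := by
        rw [Finset.sum_apply]; rfl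
    _ = ∑ n, M n i * φ (fun j => g j i) := by
        exact Finset.sum_congr rfl fun n _ => hterm n
    _ = (∑ n, M n i) * φ (fun j => g j i) := by rw [Finset.sum_mul]
    _ = G i * φ (fun j => g j i) := by rw [hG, Finset.sum_apply]
    _ = φ (fun j => (G * g j) i) := by rw [hR, map_smul, smul_eq_mul]
end

section
/- Let I be a finite index set, M₁, …, M_N : I → ℝ binary masks (each Mₙ(i) ∈ {0,1}), and G = Σₙ Mₙ. Let f be an elementwise linear optimizer given by a linear map φ : ℝ^{T+1} → ℝ. For any branch weights W₁, …, W_N : I → ℝ, any gradient history g⁽⁰⁾, …, g⁽ᵀ⁾ : I → ℝ, and any learning rate λ ∈ ℝ, the merged result of one gradient-descent step on each branch equals one gradient-descent step on the merged weight with spatially scaled gradients: Σₙ Mₙ ⊙ (Wₙ − λ · f(Mₙ ⊙ g⁽ᵀ⁾, …, Mₙ ⊙ g⁽⁰⁾)) = (Σₙ Mₙ ⊙ Wₙ) − λ · f(G ⊙ g⁽ᵀ⁾, …, G ⊙ g⁽⁰⁾). -/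
/-- One step of gradient descent on each branch of an `N`-branch
reparameterization (with binary masks `M n`, branch weights `W n`, an elementwise linear
optimizer `f` given coordinatewise by a linear map `φ : ℝ^(T+1) → ℝ`, and learning rate `λ`),
merged via the masks, equals one step of gradient descent on the merged weight
`∑ n, M n ⊙ W n` with the gradient history scaled elementwise by `G = ∑ n, M n`. -/
theorem sgs_one_step_merge
    {I : Type*} [Fintype I] {N T : ℕ}
    (M : Fin N → I → ℝ)
    (hM : ∀ n i, M n i = 0 ∨ M n i = 1)
    (G : I → ℝ) (hG : G = ∑ n, M n)
    (φ : (Fin (T + 1) → ℝ) →ₗ[ℝ] ℝ)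
    (W : Fin N → I → ℝ)
    (g : Fin (T + 1) → I → ℝ)
    (lam : ℝ) :
    (∑ n, M n * (W n - lam • (fun i => φ (fun j => (M n * g j) i))))
      = (∑ n, M n * W n) - lam • (fun i => φ (fun j => (G * g j) i)) := by
  funext i
  have hGi : G i = ∑ n, M n i := by rw [hG]; simp
  have hφG : φ (fun j => G i * g j i) = G i * φ (fun j => g j i) := by
    have : (fun j => G i * g j i) = G i • (fun j => g j i) := rfl
    rw [this, map_smul, smul_eq_mul]
  have key : ∀ n, M n i * φ (fun j => M n i * g j i) = M n i * φ (fun j => g j i) := by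
    intro n
    rcases hM n i with h | h
    · have : (fun j => M n i * g j i) = (0 : Fin (T+1) → ℝ) := by
        funext j; simp [h]
      rw [this, map_zero, h]; ring
    · have : (fun j => M n i * g j i) = (fun j => g j i) := by
        funext j; simp [h]
      rw [this]
  simp only [Finset.sum_apply, Pi.mul_apply, Pi.sub_apply, Pi.smul_apply, smul_eq_mul,
    hφG, mul_sub]
  rw [Finset.sum_sub_distrib]
  congr 1
  have key' : ∀ n, M n i * (lam * φ (fun j => M n i * g j i))
      = lam * (M n i * φ (fun j => g j i)) := by
    intro n
    rw [← mul_assoc, mul_comm (M n i) lam, mul_assoc, key n, ← mul_assoc, mul_assoc]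
  rw [Finset.sum_congr rfl fun n _ => key' n, ← Finset.mul_sum, ← Finset.sum_mul, ← hGi]
end

section
/- Let I be a finite index set, ℓ : (I → ℝ) → ℝ a differentiable loss function on merged weights (with gradient ∇ℓ taken with respect to the standard Euclidean inner product on I → ℝ), M₁, …, M_N : I → ℝ binary masks (each Mₙ(i) ∈ {0,1}), and G = Σₙ Mₙ. Fix λ > 0 and initial branch weights Wₙ⁽⁰⁾. Define the reparameterized SGD trajectory Wₙ⁽ᵗ⁺¹⁾ = Wₙ⁽ᵗ⁾ − λ · Mₙ ⊙ ∇ℓ(Σₘ Mₘ ⊙ Wₘ⁽ᵗ⁾) for each branch n, and the spatially-gradient-scaled SGD trajectory Ŵ⁽⁰⁾ = Σₙ Mₙ ⊙ Wₙ⁽⁰⁾, Ŵ⁽ᵗ⁺¹⁾ = Ŵ⁽ᵗ⁾ − λ · G ⊙ ∇ℓ(Ŵ⁽ᵗ⁾). Then for all t ≥ 0, Σₙ Mₙ ⊙ Wₙ⁽ᵗ⁾ = Ŵ⁽ᵗ⁾. -/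
/-- Pointwise (elementwise) multiplication `M ⊙ v` of a scaling `M : I → ℝ` with a vector of
the Euclidean space `I → ℝ`. -/
noncomputable def emul {I : Type*} [Fintype I] (M : I → ℝ) (v : EuclideanSpace ℝ I) :
    EuclideanSpace ℝ I := WithLp.toLp 2 (fun i => M i * v i)

/-- For a differentiable loss `ℓ` on merged weights (Euclidean space
`I → ℝ`), binary masks `M n` with `G = ∑ n, M n`, learning rate `λ > 0`, the reparameterized
SGD trajectory `Wb n (t+1) = Wb n t − λ • M n ⊙ ∇ℓ(∑ m, M m ⊙ Wb m t)` and the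
spatially-gradient-scaled SGD trajectory `Ŵ 0 = ∑ n, M n ⊙ Wb n 0`,
`Ŵ (t+1) = Ŵ t − λ • G ⊙ ∇ℓ(Ŵ t)` satisfy `∑ n, M n ⊙ Wb n t = Ŵ t` for all `t`. -/
theorem sgs_sgd_trajectory_equivalence
    {I : Type*} [Fintype I] {N : ℕ}
    (ℓ : EuclideanSpace ℝ I → ℝ)
    (hdiff : Differentiable ℝ ℓ)
    (M : Fin N → I → ℝ)
    (hM : ∀ n i, M n i = 0 ∨ M n i = 1)
    (G : I → ℝ) (hG : G = ∑ n, M n)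
    (lam : ℝ) (hlam : 0 < lam)
    (Wb : Fin N → ℕ → EuclideanSpace ℝ I)
    (hWb : ∀ n t, Wb n (t + 1)
        = Wb n t - lam • emul (M n) (gradient ℓ (∑ m, emul (M m) (Wb m t))))
    (Wmerged : ℕ → EuclideanSpace ℝ I)
    (hW0 : Wmerged 0 = ∑ n, emul (M n) (Wb n 0))
    (hWstep : ∀ t, Wmerged (t + 1)
        = Wmerged t - lam • emul G (gradient ℓ (Wmerged t))) :
    ∀ t, (∑ n, emul (M n) (Wb n t)) = Wmerged t := by
  intro t
  induction t with
  | zero => exact hW0.symm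
  | succ t ih =>
    rw [hWstep t, ← ih]
    ext i
    have hsq : ∀ n : Fin N, M n i * M n i = M n i := by
      intro n; rcases hM n i with h | h <;> simp [h]
    have happ : ∀ (s : Finset (Fin N)) (f : Fin N → EuclideanSpace ℝ I),
        (∑ n ∈ s, f n) i = ∑ n ∈ s, f n i := by
      intro s f
      induction s using Finset.induction with
      | empty => rfl
      | insert _ _ h ihh => rw [Finset.sum_insert h, Finset.sum_insert h, ← ihh]; rfl
    simp only [PiLp.sub_apply, PiLp.smul_apply, smul_eq_mul, happ]
    simp only [hWb, ih]
    simp only [hWb, PiLp.sub_apply, PiLp.smul_apply, emul, PiLp.toLp_apply, smul_eq_mul, ih, hG]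
    simp only [mul_sub]
    rw [Finset.sum_sub_distrib]
    congr 1
    calc ∑ x : Fin N, M x i * (lam * (M x i * gradient ℓ (Wmerged t) i))
        = ∑ x : Fin N, lam * (M x i * M x i * gradient ℓ (Wmerged t) i) := by
          apply Finset.sum_congr rfl; intro x _; ring
      _ = lam * ((∑ c : Fin N, M c i) * gradient ℓ (Wmerged t) i) := by
          simp only [hsq, ← Finset.mul_sum, Finset.sum_mul]
      _ = lam * ((∑ n : Fin N, M n) i * gradient ℓ (Wmerged t) i) := by
          rw [Finset.sum_apply]
end

section
/- Let I be a finite index set, M₁, …, M_N : I → ℝ binary masks (each Mₙ(i) ∈ {0,1}), and G = Σₙ Mₙ. Consider gradient descent with weight decay coefficient δ ∈ ℝ, whose update function is f(g, W) = g + δ · W. Then for any branch weights W₁, …, W_N : I → ℝ with merged weight W = Σₙ Mₙ ⊙ Wₙ, any gradient g : I → ℝ, and any learning rate λ ∈ ℝ: Σₙ Mₙ ⊙ (Wₙ − λ · (Mₙ ⊙ g + δ · Wₙ)) = W − λ · (G ⊙ g + δ · W); that is, one step of weight-decayed gradient descent on all branches merges to one step of weight-decayed gradient descent on the merged weight with the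 gradient scaled elementwise by G. -/
/-- For binary masks `M n` with `G = ∑ n, M n`, gradient descent with weight
decay `δ` (update function `f(g, W) = g + δ • W`): one step on every branch, merged via the
masks, equals one step on the merged weight `W = ∑ n, M n ⊙ W n` with the gradient scaled
elementwise by `G`:
`∑ n, M n ⊙ (W n − λ • (M n ⊙ g + δ • W n)) = W − λ • (G ⊙ g + δ • W)`. -/
theorem sgs_weight_decay_one_step
    {I : Type*} [Fintype I] {N : ℕ}
    (M : Fin N → I → ℝ)
    (hM : ∀ n i, M n i = 0 ∨ M n i = 1)
    (G : I → ℝ) (hG : G = ∑ n, M n)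
    (δ : ℝ)
    (W : Fin N → I → ℝ)
    (Wmerged : I → ℝ) (hW : Wmerged = ∑ n, M n * W n)
    (g : I → ℝ) (lam : ℝ) :
    (∑ n, M n * (W n - lam • (M n * g + δ • W n)))
      = Wmerged - lam • (G * g + δ • Wmerged) := by
  subst hG hW
  funext i
  simp only [Finset.sum_apply, Pi.mul_apply, Pi.sub_apply, Pi.add_apply, Pi.smul_apply,
    smul_eq_mul, Finset.sum_mul, Finset.mul_sum]
  have hsq : ∀ n, M n i * M n i = M n i := fun n => by rcases hM n i with h | h <;> simp [h]
  rw [← Finset.sum_add_distrib, Finset.mul_sum, ← Finset.sum_sub_distrib]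
  apply Finset.sum_congr rfl
  intro n _
  rcases hM n i with h | h <;> simp [h] <;> ring
end

section
/- Let I be a finite index set, M₁, …, M_N : I → ℝ binary masks (each Mₙ(i) ∈ {0,1}), and G = Σₙ Mₙ. Fix a momentum coefficient β ∈ ℝ and an arbitrary gradient sequence g⁽⁰⁾, g⁽¹⁾, … : I → ℝ. Define branch momentum buffers vₙ⁽⁰⁾ = Mₙ ⊙ g⁽⁰⁾ and vₙ⁽ᵗ⁺¹⁾ = β · vₙ⁽ᵗ⁾ + Mₙ ⊙ g⁽ᵗ⁺¹⁾, and a merged momentum buffer v̂⁽⁰⁾ = G ⊙ g⁽⁰⁾ and v̂⁽ᵗ⁺¹⁾ = β · v̂⁽ᵗ⁾ + G ⊙ g⁽ᵗ⁺¹⁾. Then for all t ≥ 0, Σₙ Mₙ ⊙ vₙ⁽ᵗ⁾ = v̂⁽ᵗ⁾: the sum of masked branch momentum buffers equals the momentum buffer of the single merged convolution trained with gradients scaled elementwise by G. -/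
/-- For binary masks `M n` with `G = ∑ n, M n`, momentum coefficient `β`, and
any gradient sequence `g`, the branch momentum buffers `v n 0 = M n ⊙ g 0`,
`v n (t+1) = β • v n t + M n ⊙ g (t+1)` and the merged buffer `v̂ 0 = G ⊙ g 0`,
`v̂ (t+1) = β • v̂ t + G ⊙ g (t+1)` satisfy `∑ n, M n ⊙ v n t = v̂ t` for all `t`. -/
theorem sgs_momentum_buffer_equivalence
    {I : Type*} [Fintype I] {N : ℕ}
    (M : Fin N → I → ℝ)
    (hM : ∀ n i, M n i = 0 ∨ M n i = 1)
    (G : I → ℝ) (hG : G = ∑ n, M n)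
    (β : ℝ)
    (g : ℕ → I → ℝ)
    (v : Fin N → ℕ → I → ℝ)
    (hv0 : ∀ n, v n 0 = M n * g 0)
    (hv : ∀ n t, v n (t + 1) = β • v n t + M n * g (t + 1))
    (vhat : ℕ → I → ℝ)
    (hvhat0 : vhat 0 = G * g 0)
    (hvhat : ∀ t, vhat (t + 1) = β • vhat t + G * g (t + 1)) :
    ∀ t, ∑ n, M n * v n t = vhat t := by
  have hidem : ∀ n, M n * M n = M n := by
    intro n
    funext i
    rcases hM n i with h | h <;> simp [h]
  intro t
  induction t with
  | zero =>
      simp only [hv0, hvhat0, hG]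
      rw [Finset.sum_mul]
      congr 1
      funext n
      rw [← mul_assoc, hidem]
  | succ t ih =>
      rw [hvhat t, ← ih]
      have : ∀ n, M n * v n (t + 1) = β • (M n * v n t) + M n * g (t + 1) := by
        intro n
        rw [hv n t]
        funext i
        simp only [Pi.add_apply, Pi.mul_apply, Pi.smul_apply, smul_eq_mul]
        rcases hM n i with h | h <;> rw [h] <;> ring
      simp only [this]
      rw [Finset.sum_add_distrib, ← Finset.smul_sum, hG, Finset.sum_mul]
end
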